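/- Let G be a finite solvable group and N a complemented minimal normal subgroup of G. If N has more than one complement in G, then the number b of complements of N in G satisfies b ≥ |N|. -/

import Mathlib

open Subgroup Pointwise

section Aux

variable {G : Type*} [Group G]

private lemma equiv_mul_eq {N K : Subgroup G} (hK : N.IsComplement' K)
    {n k : G} (hn : n ∈ N) (hk : k ∈ K) :
    hK.equiv (n * k) = (⟨n, hn⟩, ⟨k, hk⟩) :=
  hK.equiv.apply_symm_apply (⟨⟨n, hn⟩, ⟨k, hk⟩⟩ : ↥(N : Set G) × ↥(K : Set G))

private lemma proj_exists {N K : Subgroup G}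
    (hcent : ∀ x ∈ N, ∀ g : G, x * g = g * x)
    (hK : N.IsComplement' K) :
    ∃ π : G →* N, (∀ n : N, π ↑n = n) ∧ π.ker = K := by
  refine ⟨{ toFun := fun g => ⟨((hK.equiv g).1 : G), (hK.equiv g).1.2⟩,
            map_one' := ?_, map_mul' := ?_ }, ?_, ?_⟩
  · apply Subtype.ext
    show ((hK.equiv (1 : G)).1 : G) = 1
    have h := equiv_mul_eq hK N.one_mem K.one_mem
    rw [mul_one] at h
    rw [h]
  · intro g₁ g₂
    obtain ⟨⟨⟨n₁, hn₁⟩, ⟨k₁, hk₁⟩⟩, rfl⟩ := hK.2 g₁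
    obtain ⟨⟨⟨n₂, hn₂⟩, ⟨k₂, hk₂⟩⟩, rfl⟩ := hK.2 g₂
    apply Subtype.ext
    show ((hK.equiv (n₁ * k₁ * (n₂ * k₂))).1 : G) =
      ((hK.equiv (n₁ * k₁)).1 : G) * ((hK.equiv (n₂ * k₂)).1 : G)
    have hc : n₂ * k₁ = k₁ * n₂ := hcent n₂ hn₂ k₁
    have heq : n₁ * k₁ * (n₂ * k₂) = (n₁ * n₂) * (k₁ * k₂) := by
      rw [mul_assoc n₁ k₁ (n₂ * k₂), ← mul_assoc k₁ n₂ k₂, ← hc, mul_assoc n₂ k₁ k₂,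
        ← mul_assoc n₁ n₂ (k₁ * k₂)]
    rw [heq, equiv_mul_eq hK (N.mul_mem hn₁ hn₂) (K.mul_mem hk₁ hk₂),
      equiv_mul_eq hK hn₁ hk₁, equiv_mul_eq hK hn₂ hk₂]
  · intro n
    apply Subtype.ext
    show ((hK.equiv ((n : G))).1 : G) = (n : G)
    have h := equiv_mul_eq hK n.2 K.one_mem
    rw [mul_one] at h
    rw [h]
  · ext g
    simp only [MonoidHom.mem_ker]
    constructor
    · intro hg
      have h1 : ((hK.equiv g).1 : G) = 1 := congrArg Subtype.val hg
      have h2 := hK.equiv_fst_mul_equiv_snd g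
      rw [h1, one_mul] at h2
      exact h2 ▸ (hK.equiv g).2.2
    · intro hg
      apply Subtype.ext
      show ((hK.equiv g).1 : G) = 1
      have h := equiv_mul_eq hK N.one_mem hg
      rw [one_mul] at h
      rw [h]

private lemma compl_of_proj (N : Subgroup G) (π : G →* N) (hπ : ∀ n : N, π ↑n = n) :
    N.IsComplement' π.ker := by
  constructor
  · rintro ⟨⟨a, ha⟩, ⟨b, hb⟩⟩ ⟨⟨a', ha'⟩, ⟨b', hb'⟩⟩ h
    simp only at h
    have hb0 : π b = 1 := hb
    have hb0' : π b' = 1 := hb'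
    have h2 : π (a * b) = π (a' * b') := by rw [h]
    rw [map_mul, map_mul, hb0, hb0', mul_one, mul_one, hπ ⟨a, ha⟩, hπ ⟨a', ha'⟩] at h2
    have haa : a = a' := congrArg Subtype.val h2
    subst haa
    have hbb : b = b' := mul_left_cancel h
    subst hbb
    rfl
  · intro g
    have hker : (π g : G)⁻¹ * g ∈ π.ker := by
      rw [MonoidHom.mem_ker, map_mul, map_inv, hπ (π g), inv_mul_cancel]
    refine ⟨⟨⟨(π g : G), (π g).2⟩, ⟨(π g : G)⁻¹ * g, hker⟩⟩, ?_⟩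
    show (π g : G) * ((π g : G)⁻¹ * g) = g
    group

private lemma proj_unique {N : Subgroup G} (π ψ : G →* N)
    (hπ : ∀ n : N, π ↑n = n) (hψ : ∀ n : N, ψ ↑n = n) (h : π.ker = ψ.ker) : π = ψ := by
  ext g
  have hker : (π g : G)⁻¹ * g ∈ π.ker := by
    rw [MonoidHom.mem_ker, map_mul, map_inv, hπ (π g), inv_mul_cancel]
  have hg : g = (π g : G) * ((π g : G)⁻¹ * g) := by group
  have h2 : ψ ((π g : G)⁻¹ * g) = 1 := by rw [← MonoidHom.mem_ker, ← h]; exact hker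
  conv_rhs => rw [hg]
  rw [map_mul, h2, mul_one, hψ (π g)]

private lemma isCompl_smul [Finite G] {N H : Subgroup G} [N.Normal]
    (hH : N.IsComplement' H) (g : G) : N.IsComplement' (MulAut.conj g • H) := by
  apply isComplement'_of_card_mul_and_disjoint
  · have : Nat.card ↥(MulAut.conj g • H) = Nat.card ↥H := by
      rw [pointwise_smul_def]
      exact (Nat.card_congr (Subgroup.equivMapOfInjective H _
        (MulAut.conj g).injective).toEquiv).symm
    rw [this]
    exact hH.card_mul
  · rw [disjoint_iff, eq_bot_iff]
    intro x hx
    rw [Subgroup.mem_inf] at hx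
    obtain ⟨hxN, hxH⟩ := hx
    rw [Subgroup.mem_pointwise_smul_iff_inv_smul_mem] at hxH
    have hmem : (MulAut.conj g)⁻¹ • x ∈ N := by
      rw [← map_inv, MulAut.smul_def, MulAut.conj_apply]
      exact (Subgroup.Normal.conj_mem ‹N.Normal› x hxN g⁻¹)
    have : (MulAut.conj g)⁻¹ • x ∈ N ⊓ H := ⟨hmem, hxH⟩
    rw [hH.disjoint.eq_bot, Subgroup.mem_bot] at this
    have hx1 : x = 1 := by
      calc x = MulAut.conj g • ((MulAut.conj g)⁻¹ • x) := (smul_inv_smul _ _).symm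
        _ = MulAut.conj g • (1 : G) := by rw [this]
        _ = 1 := by simp
    simp [hx1]

end Aux

theorem stmt_19 (G : Type*) [Group G] [Finite G] [Group.IsSolvable G]
    (N : Subgroup G) [N.Normal] (hN : N ≠ ⊥)
    (hmin : ∀ K : Subgroup G, K.Normal → K ≤ N → K = ⊥ ∨ K = N)
    (hcompl : ∃ H : Subgroup G, N.IsComplement' H)
    (hb : 1 < Nat.card {H : Subgroup G // N.IsComplement' H}) :
    Nat.card N ≤ Nat.card {H : Subgroup G // N.IsComplement' H} := by
  classical
  haveI : Finite (Subgroup G) :=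
    Finite.of_injective (fun H : Subgroup G => (H : Set G)) SetLike.coe_injective
  haveI : Finite {H : Subgroup G // N.IsComplement' H} := Subtype.finite
  obtain ⟨H, hH⟩ := hcompl
  -- N is abelian
  have hcomm : ∀ x ∈ N, ∀ y ∈ N, x * y = y * x := by
    rcases hmin ⁅N, N⁆ inferInstance (Subgroup.commutator_le_right N N) with h | h
    · have hle := Subgroup.commutator_eq_bot_iff_le_centralizer.mp h
      intro x hx y hy
      exact Subgroup.mem_centralizer_iff.mp (hle hy) x hx
    · exfalso
      have hmap : (⊤ : Subgroup N).map N.subtype = N := by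
        rw [← MonoidHom.range_eq_map N.subtype, N.range_subtype]
      have htopcomm : (⁅(⊤ : Subgroup N), (⊤ : Subgroup N)⁆ : Subgroup N) = ⊤ := by
        apply Subgroup.map_injective N.subtype_injective
        rw [Subgroup.map_commutator, hmap]
        exact h
      obtain ⟨n, hn⟩ := (isSolvable_def N).mp inferInstance
      have htop : ∀ m, derivedSeries N m = ⊤ := by
        intro m
        induction m with
        | zero => rfl
        | succ m ih => rw [derivedSeries_succ, ih, htopcomm]
      rw [htop n] at hn
      apply hN
      rw [eq_bot_iff]
      intro x hx
      have : (⟨x, hx⟩ : N) ∈ (⊤ : Subgroup N) := Subgroup.mem_top _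
      rw [hn, Subgroup.mem_bot] at this
      have : x = 1 := congrArg Subtype.val this
      simp [this]
  have hPnormal : (N ⊓ (Subgroup.normalizer (H : Set G))).Normal := by
    constructor
    intro x hx g
    obtain ⟨⟨⟨n, hn⟩, ⟨k, hk⟩⟩, rfl⟩ := hH.2 g
    simp only
    obtain ⟨hxN, hxnor⟩ := Subgroup.mem_inf.mp hx
    have hy : k * x * k⁻¹ ∈ N ⊓ (Subgroup.normalizer (H : Set G)) := by
      rw [Subgroup.mem_inf]
      refine ⟨Subgroup.Normal.conj_mem ‹N.Normal› x hxN k, ?_⟩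
      exact (Subgroup.normalizer (H : Set G)).mul_mem ((Subgroup.normalizer (H : Set G)).mul_mem ((Subgroup.le_normalizer (H := H)) hk) hxnor)
        ((Subgroup.normalizer (H : Set G)).inv_mem ((Subgroup.le_normalizer (H := H)) hk))
    have hcn : n * (k * x * k⁻¹) * n⁻¹ = k * x * k⁻¹ := by
      rw [hcomm n hn _ (Subgroup.mem_inf.mp hy).1, mul_assoc, mul_inv_cancel, mul_one]
    have : n * k * x * (n * k)⁻¹ = n * (k * x * k⁻¹) * n⁻¹ := by group
    rw [this, hcn]
    exact hy
  rcases hmin _ hPnormal inf_le_left with hP | hP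
  · -- non-central case: conjugates of H give |N| complements
    set F : N → {H' : Subgroup G // N.IsComplement' H'} :=
      fun n => ⟨MulAut.conj (n : G) • H, isCompl_smul hH (n : G)⟩ with hF
    have hFinj : Function.Injective F := by
      intro n₁ n₂ h
      have hsm : MulAut.conj (n₁ : G) • H = MulAut.conj (n₂ : G) • H :=
        congrArg Subtype.val h
      have hone : MulAut.conj ((n₂ : G)⁻¹ * n₁) • H = H := by
        rw [map_mul, map_inv, mul_smul, hsm, inv_smul_smul]
      set m : G := (n₂ : G)⁻¹ * n₁ with hm
      have hmem : m ∈ N ⊓ (Subgroup.normalizer (H : Set G)) := by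
        rw [Subgroup.mem_inf]
        refine ⟨N.mul_mem (N.inv_mem n₂.2) n₁.2, ?_⟩
        rw [Subgroup.mem_normalizer_iff]
        intro x
        constructor
        · intro hx
          have := Subgroup.smul_mem_pointwise_smul x (MulAut.conj m) H hx
          rwa [hone, MulAut.smul_def, MulAut.conj_apply] at this
        · intro hx
          have : m * x * m⁻¹ ∈ MulAut.conj m • H := hone.symm ▸ hx
          rw [Subgroup.mem_pointwise_smul_iff_inv_smul_mem, ← map_inv, MulAut.smul_def,
            MulAut.conj_apply] at this
          have hxx : m⁻¹ * (m * x * m⁻¹) * m⁻¹⁻¹ = x := by group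
          rwa [hxx] at this
      rw [hP, Subgroup.mem_bot] at hmem
      have hmm : (n₂ : G)⁻¹ * ↑n₁ = 1 := hmem
      exact Subtype.ext (inv_mul_eq_one.mp hmm).symm
    exact Nat.card_le_card_of_injective F hFinj
  · -- central case
    have hNnorm : N ≤ (Subgroup.normalizer (H : Set G)) := inf_eq_left.mp hP
    haveI hHnormal : H.Normal := by
      rw [← Subgroup.normalizer_eq_top_iff, eq_top_iff, ← hH.sup_eq_top]
      exact sup_le hNnorm (Subgroup.le_normalizer (H := H))
    have hcommNH : ⁅N, H⁆ = ⊥ :=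
      le_bot_iff.mp (le_trans (le_inf (Subgroup.commutator_le_left N H)
        (Subgroup.commutator_le_right N H)) hH.disjoint.le_bot)
    have hNHc := Subgroup.commutator_eq_bot_iff_le_centralizer.mp hcommNH
    have hcent : ∀ x ∈ N, ∀ g : G, x * g = g * x := by
      intro x hx g
      obtain ⟨⟨⟨n, hn⟩, ⟨k, hk⟩⟩, rfl⟩ := hH.2 g
      simp only
      have h1 : x * n = n * x := hcomm x hx n hn
      have h2 : k * x = x * k := Subgroup.mem_centralizer_iff.mp (hNHc hx) k hk
      rw [← mul_assoc, h1, mul_assoc, ← h2, ← mul_assoc]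
    -- N has prime order q
    have hcard_ne : Nat.card N ≠ 1 := fun h => hN (Subgroup.card_eq_one.mp h)
    obtain ⟨q, hq, hdvd⟩ := Nat.exists_prime_and_dvd hcard_ne
    haveI : Fact q.Prime := ⟨hq⟩
    obtain ⟨y, hy⟩ := exists_prime_orderOf_dvd_card' (G := N) q hdvd
    have horder_x : orderOf (y : G) = q := by
      rw [← hy]
      exact orderOf_injective N.subtype N.subtype_injective y
    have hZnormal : (Subgroup.zpowers (y : G)).Normal := by
      constructor
      intro m hm g
      have hmN : m ∈ N := (Subgroup.zpowers_le.mpr y.2) hm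
      have : g * m * g⁻¹ = m := by
        rw [← hcent m hmN g, mul_assoc, mul_inv_cancel, mul_one]
      rwa [this]
    have hZeqN : Subgroup.zpowers (y : G) = N := by
      rcases hmin _ hZnormal (Subgroup.zpowers_le.mpr y.2) with h | h
      · exfalso
        have : (y : G) = 1 := Subgroup.zpowers_eq_bot.mp h
        rw [this, orderOf_one] at horder_x
        exact hq.ne_one horder_x.symm
      · exact h
    have hcardN : Nat.card N = q := by
      rw [← hZeqN, Nat.card_zpowers, horder_x]
    -- two distinct complements
    rw [Finite.one_lt_card_iff_nontrivial] at hb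
    obtain ⟨⟨K₁, hK₁⟩, ⟨K₂, hK₂⟩, hne12⟩ := hb
    letI : CommGroup N :=
      { (inferInstance : Group N) with
        mul_comm := fun a b => Subtype.ext (hcomm a a.2 b b.2) }
    obtain ⟨π₁, hπ₁, hker₁⟩ := proj_exists hcent hK₁
    obtain ⟨π₂, hπ₂, hker₂⟩ := proj_exists hcent hK₂
    set δ : G →* N := π₁ * π₂⁻¹ with hδ
    have hδn : ∀ n : N, δ ↑n = 1 := by
      intro n
      show π₁ ↑n * (π₂ ↑n)⁻¹ = 1
      rw [hπ₁, hπ₂, mul_inv_cancel]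
    have hδne : δ ≠ 1 := by
      intro h
      have hπeq : π₁ = π₂ := by rwa [hδ, mul_inv_eq_one] at h
      apply hne12
      apply Subtype.ext
      show K₁ = K₂
      rw [← hker₁, ← hker₂, hπeq]
    have hδpow : δ ^ q = 1 := by
      ext g
      have h1 : (δ g) ^ (Nat.card N) = 1 := pow_card_eq_one'
      rw [hcardN] at h1
      show (((δ ^ q) g : N) : G) = ((1 : G →* N) g : G)
      rw [show (δ ^ q) g = (δ g) ^ q from rfl, h1]
      rfl
    have horderδ : orderOf δ = q := by
      rcases hq.eq_one_or_self_of_dvd _ (orderOf_dvd_of_pow_eq_one hδpow) with h | h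
      · exact absurd (orderOf_eq_one_iff.mp h) hδne
      · exact h
    have hψn : ∀ (i : ℕ) (n : N), (δ ^ i * π₂) ↑n = n := by
      intro i n
      show (δ ↑n) ^ i * π₂ ↑n = n
      rw [hδn, one_pow, one_mul, hπ₂]
    set F : Fin q → {H' : Subgroup G // N.IsComplement' H'} :=
      fun i => ⟨(δ ^ (i : ℕ) * π₂).ker, compl_of_proj N _ (hψn i)⟩ with hFdef
    haveI : Finite (G →* N) :=
      Finite.of_injective (fun f : G →* N => (f : G → N)) DFunLike.coe_injective
    have hFinj : Function.Injective F := by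
      intro i j hij
      have hkers : (δ ^ (i : ℕ) * π₂).ker = (δ ^ (j : ℕ) * π₂).ker :=
        congrArg Subtype.val hij
      have heq : δ ^ (i : ℕ) * π₂ = δ ^ (j : ℕ) * π₂ :=
        proj_unique _ _ (hψn i) (hψn j) hkers
      have hpow : δ ^ (i : ℕ) = δ ^ (j : ℕ) := mul_right_cancel heq
      have : (i : ℕ) = (j : ℕ) := by
        apply pow_injOn_Iio_orderOf (x := δ) _ _ hpow
        · rw [horderδ]; exact i.2
        · rw [horderδ]; exact j.2
      exact Fin.ext this
    calc Nat.card N = q := hcardN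
      _ = Nat.card (Fin q) := by simp
      _ ≤ Nat.card {H' : Subgroup G // N.IsComplement' H'} :=
          Nat.card_le_card_of_injective F hFinj
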